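/- The sequence (|kA|^{1/k})_{k≥1} is non-increasing: for every finite nonempty set A in a commutative group and every k ≥ 1, |(k+1)A|^k ≤ |kA|^{k+1}. -/

import Mathlib

open Pointwise

open Finset
open scoped NNReal

def gmrProj {ι α : Type*} [DecidableEq ι] (d : α) (J : Finset ι) (f : ι → α) : ι → α :=
  fun i => if i ∈ J then f i else d

lemma gmrProj_def {ι α : Type*} [DecidableEq ι] (d : α) (J : Finset ι) (f : ι → α) (i : ι) :
    gmrProj d J f i = if i ∈ J then f i else d := rfl

lemma gmrProj_comp {ι α : Type*} [DecidableEq ι] (d : α) {J J' : Finset ι} (h : J ⊆ J') (f : ι → α) :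
    gmrProj d J (gmrProj d J' f) = gmrProj d J f := by
  funext i
  by_cases hi : i ∈ J
  · simp [gmrProj, hi, h hi]
  · simp [gmrProj, hi]

lemma gmr_P_mono {ι α : Type*} [Fintype ι] [DecidableEq ι] [DecidableEq α] (d : α)
    {J J' : Finset ι} (h : J ⊆ J') (T : Finset (ι → α)) :
    (T.image (gmrProj d J)).card ≤ (T.image (gmrProj d J')).card := by
  have : T.image (gmrProj d J) = (T.image (gmrProj d J')).image (gmrProj d J) := by
    rw [Finset.image_image]
    apply Finset.image_congr
    intro f _
    exact (gmrProj_comp d h f).symm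
  rw [this]
  exact Finset.card_image_le

lemma gmr_P_fiber {ι α : Type*} [Fintype ι] [DecidableEq ι] [DecidableEq α] (d : α)
    {J : Finset ι} {j₀ : ι} (hj : j₀ ∈ J) (R : Finset (ι → α)) :
    (R.image (gmrProj d J)).card =
      ∑ a ∈ R.image (fun f => f j₀), ((R.filter (fun f => f j₀ = a)).image (gmrProj d J)).card := by
  rw [Finset.card_eq_sum_card_fiberwise (f := fun g => g j₀)
    (t := R.image (fun f => f j₀)) ?_]
  · refine Finset.sum_congr rfl fun a _ => ?_
    congr 1
    ext g
    simp only [Finset.mem_filter, Finset.mem_image]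
    constructor
    · rintro ⟨⟨f, hf, rfl⟩, h2⟩
      refine ⟨f, ⟨hf, ?_⟩, rfl⟩
      simpa [gmrProj, hj] using h2
    · rintro ⟨f, ⟨hf, ha⟩, rfl⟩
      exact ⟨⟨f, hf, rfl⟩, by simpa [gmrProj, hj] using ha⟩
  · rintro g hg
    obtain ⟨f, hf, rfl⟩ := Finset.mem_image.mp hg
    simp only [gmrProj, hj, if_true]
    exact Finset.mem_image_of_mem _ hf

lemma gmr_P_slice {ι α : Type*} [Fintype ι] [DecidableEq ι] [DecidableEq α] (d : α)
    {U : Finset ι} {j₀ : ι} (hj₀ : j₀ ∈ U) (a : α) (T : Finset (ι → α))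
    (hT : ∀ f ∈ T, f j₀ = a) :
    (T.image (gmrProj d U)).card = (T.image (gmrProj d (U.erase j₀))).card := by
  have h1 : T.image (gmrProj d (U.erase j₀)) =
      (T.image (gmrProj d U)).image (gmrProj d (U.erase j₀)) := by
    rw [Finset.image_image]
    apply Finset.image_congr
    intro f _
    exact (gmrProj_comp d (Finset.erase_subset _ _) f).symm
  rw [h1]
  symm
  apply Finset.card_image_of_injOn
  rintro g hg g' hg' h
  obtain ⟨f, hf, rfl⟩ := Finset.mem_image.mp hg
  obtain ⟨f', hf', rfl⟩ := Finset.mem_image.mp hg'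
  rw [gmrProj_comp d (Finset.erase_subset _ _) f, gmrProj_comp d (Finset.erase_subset _ _) f'] at h
  funext i
  rw [gmrProj_def, gmrProj_def]
  by_cases hiU : i ∈ U
  · rw [if_pos hiU, if_pos hiU]
    by_cases hi0 : i = j₀
    · subst hi0
      rw [hT f hf, hT f' hf']
    · have hiE : i ∈ U.erase j₀ := Finset.mem_erase.mpr ⟨hi0, hiU⟩
      have h2 := congrFun h i
      rwa [gmrProj_def, gmrProj_def, if_pos hiE, if_pos hiE] at h2
  · rw [if_neg hiU, if_neg hiU]

-- superadditivity of weighted geometric mean, constant weight 1/m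
lemma gmr_superadd {ι : Type*} (t : Finset ι) (ht : t.Nonempty) (x y : ι → ℝ≥0) :
    (∏ j ∈ t, x j ^ ((t.card : ℝ)⁻¹)) + (∏ j ∈ t, y j ^ ((t.card : ℝ)⁻¹)) ≤
      ∏ j ∈ t, (x j + y j) ^ ((t.card : ℝ)⁻¹) := by
  have hm : (0:ℝ) < (t.card : ℝ)⁻¹ := by
    have := ht.card_pos; positivity
  by_cases hz : ∃ j ∈ t, x j + y j = 0
  · obtain ⟨j, hj, hj0⟩ := hz
    have hx0 : x j = 0 := by
      have := add_eq_zero.mp hj0; exact this.1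
    have hy0 : y j = 0 := (add_eq_zero.mp hj0).2
    have h1 : (∏ j ∈ t, x j ^ ((t.card : ℝ)⁻¹)) = 0 :=
      Finset.prod_eq_zero hj (by rw [hx0, NNReal.zero_rpow hm.ne'])
    have h2 : (∏ j ∈ t, y j ^ ((t.card : ℝ)⁻¹)) = 0 :=
      Finset.prod_eq_zero hj (by rw [hy0, NNReal.zero_rpow hm.ne'])
    rw [h1, h2, add_zero]
    exact zero_le
  · push_neg at hz
    set m : ℝ≥0 := (t.card : ℝ≥0)⁻¹ with hmdef
    have hmcoe : ((m : ℝ≥0) : ℝ) = (t.card : ℝ)⁻¹ := by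
      simp [hmdef]
    have hsum : ∑ _j ∈ t, m = 1 := by
      rw [Finset.sum_const, nsmul_eq_mul, hmdef, mul_inv_cancel₀]
      exact_mod_cast ht.card_pos.ne'
    have hx := NNReal.geom_mean_le_arith_mean_weighted t (fun _ => m)
      (fun j => x j / (x j + y j)) hsum
    have hy := NNReal.geom_mean_le_arith_mean_weighted t (fun _ => m)
      (fun j => y j / (x j + y j)) hsum
    have key : (∏ j ∈ t, (x j / (x j + y j)) ^ ((t.card : ℝ)⁻¹)) +
        (∏ j ∈ t, (y j / (x j + y j)) ^ ((t.card : ℝ)⁻¹)) ≤ 1 := by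
      rw [← hmcoe]
      refine (add_le_add hx hy).trans ?_
      rw [← Finset.sum_add_distrib]
      refine le_of_eq ?_
      calc ∑ j ∈ t, (m * (x j / (x j + y j)) + m * (y j / (x j + y j)))
          = ∑ j ∈ t, m := by
            refine Finset.sum_congr rfl fun j hj => ?_
            rw [← mul_add, ← add_div, div_self (hz j hj), mul_one]
        _ = 1 := hsum
    have expand : ∀ z : ι → ℝ≥0, (∀ j ∈ t, z j = (x j + y j) * (z j / (x j + y j))) →
        (∏ j ∈ t, z j ^ ((t.card : ℝ)⁻¹)) =
        (∏ j ∈ t, (x j + y j) ^ ((t.card : ℝ)⁻¹)) *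
          (∏ j ∈ t, (z j / (x j + y j)) ^ ((t.card : ℝ)⁻¹)) := by
      intro z hzj
      rw [← Finset.prod_mul_distrib]
      refine Finset.prod_congr rfl fun j hj => ?_
      rw [← NNReal.mul_rpow, ← hzj j hj]
    have ex : ∀ j ∈ t, x j = (x j + y j) * (x j / (x j + y j)) := fun j hj => by
      rw [mul_div_cancel₀ _ (hz j hj)]
    have ey : ∀ j ∈ t, y j = (x j + y j) * (y j / (x j + y j)) := fun j hj => by
      rw [mul_div_cancel₀ _ (hz j hj)]
    rw [expand x ex, expand y ey, ← mul_add]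
    calc _ ≤ (∏ j ∈ t, (x j + y j) ^ ((t.card : ℝ)⁻¹)) * 1 := by
          exact mul_le_mul_right key _
      _ = _ := mul_one _

-- generalized Hölder
lemma gmr_holder {ι β : Type*} [DecidableEq β] (t : Finset ι) (ht : t.Nonempty)
    (s : Finset β) (F : β → ι → ℝ≥0) :
    ∑ a ∈ s, ∏ j ∈ t, F a j ^ ((t.card : ℝ)⁻¹) ≤
      ∏ j ∈ t, (∑ a ∈ s, F a j) ^ ((t.card : ℝ)⁻¹) := by
  induction s using Finset.induction_on with
  | empty => simp
  | @insert a s0 ha ih =>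
    
    rw [Finset.sum_insert ha]
    refine (add_le_add_right ih _).trans ?_
    refine (gmr_superadd t ht (fun j => F a j) (fun j => ∑ b ∈ s0, F b j)).trans ?_
    refine le_of_eq (Finset.prod_congr rfl fun j hj => ?_)
    rw [Finset.sum_insert ha]

lemma gmr_lw {ι α : Type*} [Fintype ι] [DecidableEq ι] [DecidableEq α] (d : α)
    (U : Finset ι) :
    ∀ R : Finset (ι → α), U.Nonempty → R.Nonempty →
      ((R.image (gmrProj d U)).card : ℝ≥0) ^ (U.card - 1) ≤
        ∏ j ∈ U, ((R.image (gmrProj d (U.erase j))).card : ℝ≥0) := by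
  induction U using Finset.strongInduction with
  | _ U IH =>
    intro R hU hR
    by_cases h1 : U.card = 1
    · rw [h1]
      simp only [Nat.sub_self, pow_zero]
      apply Finset.one_le_prod'
      intro j _
      have : (R.image (gmrProj d (U.erase j))).Nonempty := hR.image _
      exact_mod_cast Nat.one_le_iff_ne_zero.mpr (Finset.card_pos.mpr this).ne'
    · obtain ⟨j₀, hj₀⟩ := hU
      have hcard1 : 1 ≤ U.card := Finset.card_pos.mpr ⟨j₀, hj₀⟩
      have hcardU : 2 ≤ U.card := by omega
      set U' := U.erase j₀ with hU'def
      have hU'ss : U' ⊂ U := Finset.erase_ssubset hj₀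
      have hcard' : U'.card = U.card - 1 := Finset.card_erase_of_mem hj₀
      have hn' : 1 ≤ U'.card := by omega
      have hU'ne : U'.Nonempty := Finset.card_pos.mp (by omega)
      set A₀ := R.image (fun f => f j₀) with hA₀def
      set S : α → Finset (ι → α) := fun a => R.filter (fun f => f j₀ = a) with hSdef
      have hSne : ∀ a ∈ A₀, (S a).Nonempty := by
        intro a ha
        obtain ⟨f, hf, rfl⟩ := Finset.mem_image.mp ha
        exact ⟨f, Finset.mem_filter.mpr ⟨hf, rfl⟩⟩
      have hSval : ∀ a, ∀ f ∈ S a, f j₀ = a := by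
        intro a f hf
        exact (Finset.mem_filter.mp hf).2
      set c : ℝ := ((U'.card : ℝ))⁻¹ with hcdef
      have hcpos : (0:ℝ) < c := by
        rw [hcdef]
        have : (0:ℝ) < (U'.card : ℝ) := by exact_mod_cast hn'
        positivity
      -- F1 : decomposition of |P U R|
      have F1 : ((R.image (gmrProj d U)).card : ℝ≥0) =
          ∑ a ∈ A₀, (((S a).image (gmrProj d U')).card : ℝ≥0) := by
        rw [gmr_P_fiber d hj₀ R]
        push_cast
        refine Finset.sum_congr rfl fun a ha => ?_
        exact congrArg (fun n : ℕ => (n : ℝ≥0)) (gmr_P_slice d hj₀ a (S a) (hSval a))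
      -- step A : pointwise bound
      have stepA : ∀ a ∈ A₀, (((S a).image (gmrProj d U')).card : ℝ≥0) ≤
          ((((R.image (gmrProj d U')).card : ℝ≥0)) *
            ∏ j ∈ U', (((S a).image (gmrProj d (U'.erase j))).card : ℝ≥0)) ^ c := by
        intro a ha
        set x : ℝ≥0 := (((S a).image (gmrProj d U')).card : ℝ≥0) with hxdef
        have hpow : x ^ (U'.card : ℕ) ≤
            (((R.image (gmrProj d U')).card : ℝ≥0)) *
              ∏ j ∈ U', (((S a).image (gmrProj d (U'.erase j))).card : ℝ≥0) := by
          have e1 : x ^ (U'.card : ℕ) = x * x ^ (U'.card - 1) := by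
            rw [← pow_succ']
            congr 1
            omega
          rw [e1]
          have hx1 : x ≤ ((R.image (gmrProj d U')).card : ℝ≥0) := by
            have h' : ((S a).image (gmrProj d U')).card ≤ (R.image (gmrProj d U')).card :=
              Finset.card_le_card (Finset.image_subset_image (Finset.filter_subset _ _))
            rw [hxdef]
            exact_mod_cast h'
          have hx2 : x ^ (U'.card - 1) ≤
              ∏ j ∈ U', (((S a).image (gmrProj d (U'.erase j))).card : ℝ≥0) :=
            IH U' hU'ss (S a) hU'ne (hSne a ha)
          exact mul_le_mul hx1 hx2 zero_le zero_le
        have e2 : x = (x ^ (U'.card : ℕ)) ^ c := by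
          rw [← NNReal.rpow_natCast x U'.card, ← NNReal.rpow_mul, hcdef,
            mul_inv_cancel₀, NNReal.rpow_one]
          exact Nat.cast_ne_zero.mpr (by omega)
        rw [e2]
        exact NNReal.rpow_le_rpow hpow hcpos.le
      -- main chain
      have main : ((R.image (gmrProj d U)).card : ℝ≥0) ≤
          (∏ j ∈ U, ((R.image (gmrProj d (U.erase j))).card : ℝ≥0)) ^ c := by
        calc ((R.image (gmrProj d U)).card : ℝ≥0)
            = ∑ a ∈ A₀, (((S a).image (gmrProj d U')).card : ℝ≥0) := F1
          _ ≤ ∑ a ∈ A₀, ((((R.image (gmrProj d U')).card : ℝ≥0)) *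
                ∏ j ∈ U', (((S a).image (gmrProj d (U'.erase j))).card : ℝ≥0)) ^ c :=
              Finset.sum_le_sum stepA
          _ = ∑ a ∈ A₀, (((R.image (gmrProj d U')).card : ℝ≥0)) ^ c *
                ∏ j ∈ U', ((((S a).image (gmrProj d (U'.erase j))).card : ℝ≥0)) ^ c := by
              refine Finset.sum_congr rfl fun a _ => ?_
              rw [NNReal.mul_rpow, NNReal.finset_prod_rpow]
          _ = (((R.image (gmrProj d U')).card : ℝ≥0)) ^ c *
                ∑ a ∈ A₀, ∏ j ∈ U', ((((S a).image (gmrProj d (U'.erase j))).card : ℝ≥0)) ^ c := by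
              rw [Finset.mul_sum]
          _ ≤ (((R.image (gmrProj d U')).card : ℝ≥0)) ^ c *
                ∏ j ∈ U', (∑ a ∈ A₀, (((S a).image (gmrProj d (U'.erase j))).card : ℝ≥0)) ^ c := by
              exact mul_le_mul_right (gmr_holder U' hU'ne A₀
                (fun a j => (((S a).image (gmrProj d (U'.erase j))).card : ℝ≥0))) _
          _ ≤ (((R.image (gmrProj d U')).card : ℝ≥0)) ^ c *
                ∏ j ∈ U', (((R.image (gmrProj d (U.erase j))).card : ℝ≥0)) ^ c := by
              refine mul_le_mul_right (Finset.prod_le_prod (fun _ _ => zero_le) ?_) _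
              intro j hj
              refine NNReal.rpow_le_rpow ?_ hcpos.le
              have hjU : j ∈ U := (Finset.erase_subset _ _) hj
              have hj₀j : j₀ ∈ U.erase j := by
                refine Finset.mem_erase.mpr ⟨?_, hj₀⟩
                intro hcon
                subst hcon
                exact (Finset.mem_erase.mp hj).1 rfl
              have hsum : ∑ a ∈ A₀, (((S a).image (gmrProj d (U'.erase j))).card) ≤
                  ((R.image (gmrProj d (U.erase j))).card) := by
                rw [gmr_P_fiber d hj₀j R]
                refine Finset.sum_le_sum fun a _ => ?_
                exact gmr_P_mono d (Finset.erase_subset_erase _ (Finset.erase_subset _ _)) (S a)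
              exact_mod_cast hsum
          _ = ((((R.image (gmrProj d U')).card : ℝ≥0)) *
                ∏ j ∈ U', (((R.image (gmrProj d (U.erase j))).card : ℝ≥0))) ^ c := by
              rw [NNReal.mul_rpow, NNReal.finset_prod_rpow]
          _ = (∏ j ∈ U, ((R.image (gmrProj d (U.erase j))).card : ℝ≥0)) ^ c := by
              congr 1
              rw [hU'def]
              exact Finset.mul_prod_erase U
                (fun j => ((R.image (gmrProj d (U.erase j))).card : ℝ≥0)) hj₀
      rw [← hcard']
      have hne : ((U'.card : ℝ)) ≠ 0 := Nat.cast_ne_zero.mpr (by omega)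
      have final := NNReal.rpow_le_rpow main (Nat.cast_nonneg U'.card)
      rw [← NNReal.rpow_mul, hcdef, inv_mul_cancel₀ hne, NNReal.rpow_one] at final
      calc ((R.image (gmrProj d U)).card : ℝ≥0) ^ (U'.card)
          = ((R.image (gmrProj d U)).card : ℝ≥0) ^ ((U'.card : ℕ) : ℝ) :=
            (NNReal.rpow_natCast _ _).symm
        _ ≤ _ := final

lemma gmr_nsmul_ex {G : Type*} [AddCommGroup G] [DecidableEq G] (A : Finset G) :
    ∀ (m : ℕ) (s : G), s ∈ m • A → ∃ w : Fin m → G, (∀ i, w i ∈ A) ∧ ∑ i, w i = s := by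
  intro m
  induction m with
  | zero =>
    intro s hs
    rw [zero_nsmul] at hs
    refine ⟨fun i => i.elim0, fun i => i.elim0, ?_⟩
    have h0 : s = 0 := by simpa [Finset.mem_zero] using hs
    simp [h0]
  | succ m ih =>
    intro s hs
    rw [succ_nsmul, Finset.mem_add] at hs
    obtain ⟨b, hb, a, ha, rfl⟩ := hs
    obtain ⟨w', hw', hsum⟩ := ih b hb
    refine ⟨Fin.snoc w' a, ?_, ?_⟩
    · intro i
      refine Fin.lastCases ?_ ?_ i
      · simpa using ha
      · intro i'
        simpa using hw' i'
    · rw [Fin.sum_univ_castSucc]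
      simp [hsum]

lemma gmr_sum_mem_nsmul {G ι : Type*} [AddCommGroup G] [DecidableEq G] [DecidableEq ι]
    (A : Finset G) (T : Finset ι) (f : ι → G) (h : ∀ i ∈ T, f i ∈ A) :
    (∑ i ∈ T, f i) ∈ T.card • A := by
  induction T using Finset.induction_on with
  | empty => simp [zero_nsmul, Finset.mem_zero]
  | @insert a T ha ih =>
    rw [Finset.sum_insert ha, Finset.card_insert_of_notMem ha, succ_nsmul, Finset.mem_add]
    exact ⟨∑ i ∈ T, f i, ih (fun i hi => h i (Finset.mem_insert_of_mem hi)),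
      f a, h a (Finset.mem_insert_self a T), by abel⟩

-- test linear order via well-ordering
example (G : Type*) [AddCommGroup G] : True := by
  letI : LinearOrder G := @linearOrderOfSTO G WellOrderingRel inferInstance (Classical.decRel _)
  trivial

theorem stmt_19 {G : Type*} [AddCommGroup G] [DecidableEq G]
    (A : Finset G) (hA : A.Nonempty) (k : ℕ) (hk : 1 ≤ k) :
    ((k + 1) • A).card ^ k ≤ (k • A).card ^ (k + 1) := by
  classical
  letI : LinearOrder G := @linearOrderOfSTO G WellOrderingRel inferInstance (Classical.decRel _)
  set n : ℕ := k + 1 with hn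
  set Rep : G → Finset (Fin n → G) :=
    fun s => (Fintype.piFinset fun _ : Fin n => A).filter (fun w => ∑ i, w i = s) with hRepdef
  have hRepNe : ∀ s ∈ n • A, (Rep s).Nonempty := by
    intro s hs
    obtain ⟨w, hw, hsum⟩ := gmr_nsmul_ex A n s hs
    exact ⟨w, Finset.mem_filter.mpr ⟨Fintype.mem_piFinset.mpr hw, hsum⟩⟩
  letI instW : WellFoundedLT (Fin n) := inferInstance
  letI instL : LinearOrder (Lex (∀ _ : Fin n, G)) := inferInstance
  set φ : G → (Fin n → G) := fun s =>
    if h : (Rep s).Nonempty then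
      ofLex (((Rep s).image (toLex : (∀ _ : Fin n, G) ≃ Lex (∀ _ : Fin n, G))).min' (h.image _))
    else fun _ => 0
    with hφdef
  have hφRep : ∀ s ∈ n • A, φ s ∈ Rep s := by
    intro s hs
    have h := hRepNe s hs
    have hm := Finset.min'_mem ((Rep s).image toLex) (h.image _)
    obtain ⟨w, hw, hww⟩ := Finset.mem_image.mp hm
    rw [hφdef]
    dsimp only
    rw [dif_pos h, ← hww]
    exact hw
  have hφmin : ∀ s ∈ n • A, ∀ w ∈ Rep s, toLex (φ s) ≤ toLex w := by
    intro s hs w hw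
    have h := hRepNe s hs
    rw [hφdef]
    dsimp only
    rw [dif_pos h]
    exact Finset.min'_le _ _ (Finset.mem_image_of_mem _ hw)
  have hφsum : ∀ s ∈ n • A, ∑ i, φ s i = s := fun s hs => (Finset.mem_filter.mp (hφRep s hs)).2
  have hφA : ∀ s ∈ n • A, ∀ i, φ s i ∈ A := fun s hs =>
    Fintype.mem_piFinset.mp (Finset.mem_filter.mp (hφRep s hs)).1
  -- half of the determinedness argument
  have hhalf : ∀ s ∈ n • A, ∀ s' ∈ n • A, ∀ j p : Fin n, p ≠ j →
      (∑ i ∈ Finset.univ.erase j, φ s i) = (∑ i ∈ Finset.univ.erase j, φ s' i) →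
      (∀ l, l < p → l ≠ j → φ s l = φ s' l) → φ s p ≠ φ s' p → φ s p < φ s' p := by
    intro s hs s' hs' j p hpj hsums hpre hneq
    set u := φ s with hu
    set v := φ s' with hv
    set w : Fin n → G := fun i => if i = j then u j else v i with hw
    have hwRep : w ∈ Rep s := by
      rw [hRepdef]
      refine Finset.mem_filter.mpr ⟨Fintype.mem_piFinset.mpr ?_, ?_⟩
      · intro i
        by_cases hi : i = j
        · rw [hw]; dsimp only; rw [if_pos hi]; exact hφA s hs j
        · rw [hw]; dsimp only; rw [if_neg hi]; exact hφA s' hs' i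
      · have e1 : ∑ i ∈ Finset.univ.erase j, w i = ∑ i ∈ Finset.univ.erase j, v i := by
          refine Finset.sum_congr rfl fun i hi => ?_
          rw [hw]; dsimp only; rw [if_neg (Finset.mem_erase.mp hi).1]
        calc ∑ i, w i = (∑ i ∈ Finset.univ.erase j, w i) + w j :=
              (Finset.sum_erase_add _ _ (Finset.mem_univ j)).symm
          _ = (∑ i ∈ Finset.univ.erase j, u i) + u j := by
              rw [e1, ← hsums]
              congr 1
              rw [hw]; dsimp only; rw [if_pos rfl]
          _ = ∑ i, u i := Finset.sum_erase_add _ _ (Finset.mem_univ j)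
          _ = s := hφsum s hs
    have hune : u ≠ w := by
      intro he
      apply hneq
      simpa [hw, hpj] using congrFun he p
    have hlt : toLex u < toLex w :=
      lt_of_le_of_ne (hφmin s hs w hwRep) (fun he => hune (by exact he))
    have hlex : Pi.Lex (· < ·) (@fun _ => (· < ·)) u w := hlt
    obtain ⟨i, hipre, hilt⟩ := hlex
    have hine : u i ≠ w i := ne_of_lt hilt
    have hij : i ≠ j := by
      intro he
      apply hine
      rw [he]
      simp [hw]
    have hwi : w i = v i := by rw [hw]; dsimp only; rw [if_neg hij]
    rcases lt_trichotomy i p with hc | hc | hc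
    · exact absurd ((hpre i hc hij).trans hwi.symm) hine
    · subst hc; rwa [hwi] at hilt
    · exact absurd (by rw [hipre p hc, hw]; dsimp only; rw [if_neg hpj]) hneq
  -- full determinedness
  have hdet : ∀ s ∈ n • A, ∀ s' ∈ n • A, ∀ j : Fin n,
      (∑ i ∈ Finset.univ.erase j, φ s i) = (∑ i ∈ Finset.univ.erase j, φ s' i) →
      ∀ i, i ≠ j → φ s i = φ s' i := by
    intro s hs s' hs' j hsums
    by_contra hcon
    push_neg at hcon
    obtain ⟨i₀, hi₀j, hi₀⟩ := hcon
    set D := Finset.univ.filter (fun i : Fin n => i ≠ j ∧ φ s i ≠ φ s' i) with hD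
    have hmemD : ∀ i : Fin n, i ∈ D ↔ (i ≠ j ∧ φ s i ≠ φ s' i) := by
      intro i
      rw [hD, Finset.mem_filter]
      simp
    have hDne : D.Nonempty := ⟨i₀, (hmemD i₀).mpr ⟨hi₀j, hi₀⟩⟩
    set p := D.min' hDne with hp
    obtain ⟨hpj, hpuv⟩ := (hmemD p).mp (D.min'_mem hDne)
    have hpre : ∀ l, l < p → l ≠ j → φ s l = φ s' l := by
      intro l hl hlj
      by_contra hne
      have : l ∈ D := by rw [hD]; exact Finset.mem_filter.mpr ⟨Finset.mem_univ _, hlj, hne⟩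
      exact absurd hl (not_lt.mpr (Finset.min'_le D l this))
    have h1 := hhalf s hs s' hs' j p hpj hsums hpre hpuv
    have h2 := hhalf s' hs' s hs j p hpj hsums.symm
      (fun l hl hlj => (hpre l hl hlj).symm) (Ne.symm hpuv)
    exact absurd h2 (lt_asymm h1)
  -- the representation set
  set R := (n • A).image φ with hRdef
  have hSne : (n • A).Nonempty := by
    obtain ⟨a, ha⟩ := hA
    refine ⟨∑ _i ∈ (Finset.univ : Finset (Fin n)), a, ?_⟩
    have := gmr_sum_mem_nsmul A (Finset.univ : Finset (Fin n)) (fun _ => a) (fun _ _ => ha)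
    rwa [Finset.card_univ, Fintype.card_fin] at this
  have hRne : R.Nonempty := hSne.image _
  have hcardR : R.card = (n • A).card := by
    apply Finset.card_image_of_injOn
    intro s hs s' hs' he
    have h1 := hφsum s (Finset.mem_coe.mp hs)
    have h2 := hφsum s' (Finset.mem_coe.mp hs')
    rw [← h1, ← h2, he]
  -- projection bounds
  have hproj : ∀ j : Fin n,
      (R.image (gmrProj (0:G) (Finset.univ.erase j))).card ≤ (k • A).card := by
    intro j
    apply Finset.card_le_card_of_injOn (fun g => ∑ i ∈ Finset.univ.erase j, g i)
    · intro g hg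
      obtain ⟨g₀, hg₀, rfl⟩ := Finset.mem_image.mp (Finset.mem_coe.mp hg)
      obtain ⟨s, hs, rfl⟩ := Finset.mem_image.mp hg₀
      have e : ∑ i ∈ Finset.univ.erase j, gmrProj (0:G) (Finset.univ.erase j) (φ s) i =
          ∑ i ∈ Finset.univ.erase j, φ s i :=
        Finset.sum_congr rfl fun i hi => by rw [gmrProj_def, if_pos hi]
      dsimp only
      rw [e]
      have := gmr_sum_mem_nsmul A (Finset.univ.erase j) (φ s) (fun i _ => hφA s hs i)
      rwa [Finset.card_erase_of_mem (Finset.mem_univ j), Finset.card_univ, Fintype.card_fin,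
        show n - 1 = k by omega] at this
    · intro g hg g' hg' hsums
      obtain ⟨g₀, hg₀, rfl⟩ := Finset.mem_image.mp (Finset.mem_coe.mp hg)
      obtain ⟨s, hs, rfl⟩ := Finset.mem_image.mp hg₀
      obtain ⟨g₀', hg₀', rfl⟩ := Finset.mem_image.mp (Finset.mem_coe.mp hg')
      obtain ⟨s', hs', rfl⟩ := Finset.mem_image.mp hg₀'
      have e : ∀ t : G, ∀ ht : t ∈ n • A, ∑ i ∈ Finset.univ.erase j,
          gmrProj (0:G) (Finset.univ.erase j) (φ t) i = ∑ i ∈ Finset.univ.erase j, φ t i :=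
        fun t ht => Finset.sum_congr rfl fun i hi => by rw [gmrProj_def, if_pos hi]
      dsimp only at hsums
      rw [e s hs, e s' hs'] at hsums
      have hd := hdet s hs s' hs' j hsums
      funext i
      rw [gmrProj_def, gmrProj_def]
      by_cases hi : i ∈ Finset.univ.erase j
      · rw [if_pos hi, if_pos hi]
        exact hd i (Finset.mem_erase.mp hi).1
      · rw [if_neg hi, if_neg hi]
  -- apply Loomis-Whitney
  have lw := gmr_lw (0:G) (Finset.univ : Finset (Fin n)) R Finset.univ_nonempty hRne
  have huniv : R.image (gmrProj (0:G) (Finset.univ : Finset (Fin n))) = R := by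
    have : ∀ f : Fin n → G, gmrProj (0:G) (Finset.univ : Finset (Fin n)) f = f := by
      intro f; funext i; rw [gmrProj_def, if_pos (Finset.mem_univ i)]
    calc R.image (gmrProj (0:G) (Finset.univ : Finset (Fin n)))
        = R.image id := Finset.image_congr (fun f _ => this f)
      _ = R := Finset.image_id
  rw [huniv, Finset.card_univ, Fintype.card_fin, hcardR] at lw
  have hfin : (((n • A).card : ℝ≥0)) ^ (n - 1) ≤ (((k • A).card : ℝ≥0)) ^ n := by
    refine lw.trans ?_
    calc ∏ j ∈ (Finset.univ : Finset (Fin n)), ((R.image (gmrProj (0:G) (Finset.univ.erase j))).card : ℝ≥0)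
        ≤ ∏ _j ∈ (Finset.univ : Finset (Fin n)), (((k • A).card : ℝ≥0)) := by
          refine Finset.prod_le_prod (fun _ _ => zero_le) fun j _ => ?_
          exact_mod_cast hproj j
      _ = (((k • A).card : ℝ≥0)) ^ n := by
          rw [Finset.prod_const, Finset.card_univ, Fintype.card_fin]
  have hexp : n - 1 = k := by omega
  rw [hexp] at hfin
  exact_mod_cast hfin
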